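/- arXiv:1708.04864 — 15 statements merged into one kernel-verified Lean document; each statement's English description precedes it below -/
import Mathlib

section
/- Let Σ be a finite alphabet with at least two letters, let 𝒜 be a synchronizing automaton over Σ with n states, and let M = 𝓜(Syn(𝒜)) be the set of minimal reset words of 𝒜. If for some natural number ℓ there exists a word x of length ℓ over Σ that is not a factor of any word of M, then 𝒜 has a reset word of length at most n(n−1)/2 + 2ℓ. -/
/-- The action of a word on a state: `actW δ q w` is `q · w`. -/
def actW {A Q : Type*} (δ : Q → A → Q) (q : Q) (w : List A) : Q := w.foldl δ q

/-- The set of reset (synchronizing) words of the automaton `(Q, δ)`. -/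
def SynSet {A Q : Type*} (δ : Q → A → Q) : Set (List A) :=
  {w | ∃ q : Q, ∀ p : Q, actW δ p w = q}

/-- `I` is a two-sided ideal of `Σ*`. -/
def IsIdealLang {A : Type*} (I : Set (List A)) : Prop :=
  ∀ x u y : List A, u ∈ I → x ++ u ++ y ∈ I

/-- The set of minimal words of an ideal: `𝓜(I) = I \ (Σ⁺I ∪ IΣ⁺)`. -/
def MinWords {A : Type*} (I : Set (List A)) : Set (List A) :=
  I \ ({w | ∃ x u : List A, x ≠ [] ∧ u ∈ I ∧ w = x ++ u} ∪
       {w | ∃ u x : List A, u ∈ I ∧ x ≠ [] ∧ w = u ++ x})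

section Aux

variable {A Q : Type*}

lemma actW_append (δ : Q → A → Q) (q : Q) (u v : List A) :
    actW δ q (u ++ v) = actW δ (actW δ q u) v :=
  List.foldl_append ..

lemma synset_ideal (δ : Q → A → Q) : IsIdealLang (SynSet δ) := by
  rintro a u b ⟨q, hq⟩
  exact ⟨actW δ q b, fun p => by rw [actW_append, actW_append, hq]⟩

/-- Key "cross" lemma: if all minimal reset words avoid the factor `x`, then a
reset word of the form `α ++ x ++ β` can be truncated at the occurrence of `x`. -/
lemma P1 (δ : Q → A → Q) (x : List A)
    (hmiss : ∀ w ∈ MinWords (SynSet δ), ¬ x <:+: w) :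
    ∀ (n : ℕ) (α β : List A), α.length + β.length ≤ n →
      α ++ x ++ β ∈ SynSet δ → α ++ x ∈ SynSet δ ∨ x ++ β ∈ SynSet δ := by
  intro n
  induction n with
  | zero =>
      intro α β hlen hw
      have hα : α = [] := List.length_eq_zero_iff.mp (by omega)
      subst hα
      right
      simpa using hw
  | succ n ih =>
      intro α β hlen hw
      rcases α with _ | ⟨a, α'⟩
      · right; simpa using hw
      rcases List.eq_nil_or_concat β with rfl | ⟨β₀, b, rfl⟩
      · left; simpa using hw
      simp only [List.concat_eq_append] at hw hlen ⊢
      -- the word contains x, hence is not minimal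
      have hnm : (a :: α') ++ x ++ (β₀ ++ [b]) ∉ MinWords (SynSet δ) := by
        intro h
        exact hmiss _ h ⟨a :: α', β₀ ++ [b], rfl⟩
      have hmem : (a :: α') ++ x ++ (β₀ ++ [b]) ∈
          ({w | ∃ y u : List A, y ≠ [] ∧ u ∈ SynSet δ ∧ w = y ++ u} ∪
           {w | ∃ u y : List A, u ∈ SynSet δ ∧ y ≠ [] ∧ w = u ++ y}) := by
        by_contra h
        exact hnm ⟨hw, h⟩
      rcases hmem with ⟨y, u, hy, hu, heq⟩ | ⟨u, y, hu, hy, heq⟩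
      · -- strip the first letter
        rcases y with _ | ⟨y1, y2⟩
        · exact absurd rfl hy
        have htail : α' ++ x ++ (β₀ ++ [b]) = y2 ++ u := by
          have := congrArg List.tail heq
          simpa using this
        have h1 : α' ++ x ++ (β₀ ++ [b]) ∈ SynSet δ := by
          rw [htail]
          simpa using synset_ideal δ y2 u [] hu
        rcases ih α' (β₀ ++ [b]) (by simp at hlen ⊢; omega) h1 with h | h
        · left
          have := synset_ideal δ [a] (α' ++ x) [] h
          simpa using this
        · right; exact h
      · -- strip the last letter
        rcases List.eq_nil_or_concat y with rfl | ⟨y1, y2, rfl⟩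
        · exact absurd rfl hy
        simp only [List.concat_eq_append] at heq hy
        have heq2 : ((a :: α') ++ x ++ β₀) ++ [b] = (u ++ y1) ++ [y2] := by
          simpa [List.append_assoc] using heq
        have hdrop : (a :: α') ++ x ++ β₀ = u ++ y1 :=
          (List.append_inj' heq2 rfl).1
        have h1 : (a :: α') ++ x ++ β₀ ∈ SynSet δ := by
          rw [hdrop]
          simpa using synset_ideal δ [] u y1 hu
        rcases ih (a :: α') β₀ (by simp at hlen ⊢; omega) h1 with h | h
        · left; exact h
        · right
          have := synset_ideal δ [] (x ++ β₀) [b] h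
          simpa [List.append_assoc] using this

/-- Pair-merging bound: if two states can be merged "modulo `x`" by some word,
then they can be merged by a word of length at most `C(n, 2)`. -/
lemma pairMerge [Fintype Q] (δ : Q → A → Q) (x : List A) (p q : Q)
    (h : ∃ w : List A, actW δ p (w ++ x) = actW δ q (w ++ x)) :
    ∃ γ : List A, γ.length ≤ (Fintype.card Q).choose 2 ∧
      actW δ p (γ ++ x) = actW δ q (γ ++ x) := by
  classical
  set T : List A → Prop := fun w => actW δ p (w ++ x) = actW δ q (w ++ x) with hT
  set S : Set ℕ := {k | ∃ w, T w ∧ w.length = k} with hSdef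
  have hS : S.Nonempty := ⟨h.choose.length, h.choose, h.choose_spec, rfl⟩
  obtain ⟨w, hTw, hwk⟩ := Nat.sInf_mem hS
  by_cases hk : w.length ≤ (Fintype.card Q).choose 2
  · exact ⟨w, hk, hTw⟩
  push_neg at hk
  exfalso
  set P : ℕ → Q := fun t => actW δ p (w.take t) with hP
  set R : ℕ → Q := fun t => actW δ q (w.take t) with hR
  have hsInf : ∀ t, T (w.take t) → w.length ≤ t := by
    intro t ht
    have h1 : sInf S ≤ (w.take t).length := Nat.sInf_le ⟨w.take t, ht, rfl⟩
    have h2 : (w.take t).length = min t w.length := List.length_take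
    omega
  have key : ∀ t < w.length, actW δ (P t) x ≠ actW δ (R t) x := by
    intro t ht hEq
    have : T (w.take t) := by
      simpa [hT, actW_append, hP, hR] using hEq
    have := hsInf t this
    omega
  have cut : ∀ t1 t2, t1 < t2 → t2 < w.length →
      ¬ (s(P t1, R t1) = s(P t2, R t2)) := by
    intro t1 t2 h12 ht2 hEq
    have hlen2 : t2 ≤ w.length := le_of_lt ht2
    set w' : List A := w.take t1 ++ w.drop t2 with hw'
    have hTp : actW δ p (w' ++ x) = actW δ (P t1) (w.drop t2 ++ x) := by
      simp [hw', actW_append, hP, List.append_assoc]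
    have hTq : actW δ q (w' ++ x) = actW δ (R t1) (w.drop t2 ++ x) := by
      simp [hw', actW_append, hR, List.append_assoc]
    have hfullp : actW δ (P t2) (w.drop t2 ++ x) = actW δ p (w ++ x) := by
      rw [hP]
      rw [← actW_append, ← List.append_assoc, List.take_append_drop]
    have hfullq : actW δ (R t2) (w.drop t2 ++ x) = actW δ q (w ++ x) := by
      rw [hR]
      rw [← actW_append, ← List.append_assoc, List.take_append_drop]
    have hTw' : T w' := by
      rw [Sym2.eq_iff] at hEq
      rcases hEq with ⟨h1, h2⟩ | ⟨h1, h2⟩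
      · show actW δ p (w' ++ x) = actW δ q (w' ++ x)
        rw [hTp, hTq, h1, h2, hfullp, hfullq]
        exact hTw
      · show actW δ p (w' ++ x) = actW δ q (w' ++ x)
        rw [hTp, hTq, h1, h2, hfullq, hfullp]
        exact hTw.symm
    have hlen' : w'.length < w.length := by
      simp [hw']
      omega
    have h1 : sInf S ≤ w'.length := Nat.sInf_le ⟨w', hTw', rfl⟩
    rw [← hwk] at h1
    omega
  -- pigeonhole into non-diagonal unordered pairs
  let f : Fin w.length → {z : Sym2 Q // ¬ z.IsDiag} := fun t =>
    ⟨s(P t, R t), by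
      rw [Sym2.mk_isDiag_iff]
      intro hEq
      exact key t t.2 (by rw [hEq])⟩
  have hinj : Function.Injective f := by
    intro t1 t2 hEq
    have hEq' : s(P t1, R t1) = s(P t2, R t2) := by
      simpa [f] using congrArg Subtype.val hEq
    rcases lt_trichotomy (t1 : ℕ) (t2 : ℕ) with hlt | heq | hgt
    · exact absurd hEq' (cut t1 t2 hlt t2.2)
    · exact Fin.ext heq
    · exact absurd hEq'.symm (cut t2 t1 hgt t1.2)
  have hcard := Fintype.card_le_of_injective f hinj
  rw [Fintype.card_fin, Sym2.card_subtype_not_diag] at hcard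
  omega

end Aux

/-- a synchronizing automaton with `n` states whose set of minimal
reset words misses a factor of length `ℓ` has a reset word of length at most
`n(n-1)/2 + 2ℓ`. -/
theorem stmt0 {A Q : Type*} [Fintype A] [Fintype Q] [Nonempty Q]
    (hA : 1 < Fintype.card A)
    (δ : Q → A → Q) (n : ℕ) (hn : Fintype.card Q = n)
    (hsync : (SynSet δ).Nonempty)
    (ℓ : ℕ) (x : List A) (hx : x.length = ℓ)
    (hmiss : ∀ w ∈ MinWords (SynSet δ), ¬ x <:+: w) :
    ∃ u ∈ SynSet δ, u.length ≤ n * (n - 1) / 2 + 2 * ℓ := by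
  classical
  set I := SynSet δ with hI
  -- images
  set img : List A → Finset Q := fun w => Finset.univ.image (fun q => actW δ q w)
    with himg
  have img_nonempty : ∀ w, (img w).Nonempty := fun w =>
    Finset.Nonempty.image ⟨Classical.arbitrary Q, Finset.mem_univ _⟩ _
  have mem_iff : ∀ w : List A, w ∈ I ↔ (img w).card = 1 := by
    intro w
    constructor
    · rintro ⟨q, hq⟩
      have : img w = {q} := by
        apply Finset.eq_singleton_iff_unique_mem.mpr
        constructor
        · simp only [himg, Finset.mem_image]
          exact ⟨q, Finset.mem_univ q, hq q⟩
        · intro y hy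
          simp only [himg, Finset.mem_image] at hy
          obtain ⟨p, _, rfl⟩ := hy
          exact hq p
      rw [this]; simp
    · intro hc
      obtain ⟨q, hq⟩ := Finset.card_eq_one.mp hc
      refine ⟨q, fun p => ?_⟩
      have : actW δ p w ∈ img w := by
        simp only [himg, Finset.mem_image]
        exact ⟨p, Finset.mem_univ p, rfl⟩
      rw [hq] at this
      simpa using this
  have img_append : ∀ u v : List A,
      img (u ++ v) = (img u).image (fun s => actW δ s v) := by
    intro u v
    ext z
    simp only [himg, Finset.mem_image]
    constructor
    · rintro ⟨p, _, rfl⟩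
      exact ⟨actW δ p u, ⟨p, Finset.mem_univ p, rfl⟩, (actW_append δ p u v).symm⟩
    · rintro ⟨s, ⟨p, _, rfl⟩, rfl⟩
      exact ⟨p, Finset.mem_univ p, actW_append δ p u v⟩
  -- case: x itself is a reset word
  by_cases hx1 : x ∈ I
  · exact ⟨x, hx1, by omega⟩
  -- choose a minimal-cardinality non-singleton image of the form Q·(α++x)
  set Sc : Set ℕ := {m | 2 ≤ m ∧ ∃ α : List A, (img (α ++ x)).card = m} with hSc
  have hScne : Sc.Nonempty := by
    have h1 : (img x).card ≠ 1 := fun h => hx1 ((mem_iff x).mpr h)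
    have h0 : 0 < (img x).card := (img_nonempty x).card_pos
    exact ⟨(img x).card, by omega, [], by simp⟩
  obtain ⟨hc2, αs, hαs⟩ := Nat.sInf_mem hScne
  set c : ℕ := sInf Sc with hcdef
  set Cs : Finset Q := img (αs ++ x) with hCs
  -- pick two distinct states in Cs
  have hlt : 1 < Cs.card := by rw [hCs, hαs]; omega
  obtain ⟨p', hp', q', hq', hpq⟩ := Finset.one_lt_card.mp hlt
  -- merge them modulo x
  have hmergeable : ∃ w : List A, actW δ p' (w ++ x) = actW δ q' (w ++ x) := by
    obtain ⟨r, s, hs⟩ := hsync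
    exact ⟨r, by rw [actW_append, actW_append, hs p', hs q']⟩
  obtain ⟨γ, hγlen, hγ⟩ := pairMerge δ x p' q' hmergeable
  -- the next image collapses to a singleton by minimality
  set f : Q → Q := fun s => actW δ s (γ ++ x) with hf
  have hsub : img ((αs ++ x) ++ (γ ++ x)) ⊆ (Cs.erase q').image f := by
    rw [img_append, ← hCs, ← hf]
    intro z hz
    obtain ⟨y, hy, rfl⟩ := Finset.mem_image.mp hz
    by_cases hyq : y = q'
    · refine Finset.mem_image.mpr ⟨p', Finset.mem_erase.mpr ⟨hpq, hp'⟩, ?_⟩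
      rw [hyq]
      simpa [hf] using hγ
    · exact Finset.mem_image.mpr ⟨y, Finset.mem_erase.mpr ⟨hyq, hy⟩, rfl⟩
  have hcard' : (img ((αs ++ x) ++ (γ ++ x))).card < c := by
    calc (img ((αs ++ x) ++ (γ ++ x))).card
        ≤ ((Cs.erase q').image f).card := Finset.card_le_card hsub
      _ ≤ (Cs.erase q').card := Finset.card_image_le
      _ = Cs.card - 1 := Finset.card_erase_of_mem hq'
      _ < c := by rw [hCs, hαs]; omega
  have hone : (img ((αs ++ x) ++ (γ ++ x))).card = 1 := by
    by_contra hne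
    have h2 : 2 ≤ (img ((αs ++ x) ++ (γ ++ x))).card := by
      have h0 := (img_nonempty ((αs ++ x) ++ (γ ++ x))).card_pos
      omega
    have : sInf Sc ≤ (img ((αs ++ x) ++ (γ ++ x))).card :=
      Nat.sInf_le ⟨h2, αs ++ x ++ γ, by rw [← List.append_assoc]⟩
    omega
  have hIn : (αs ++ x) ++ (γ ++ x) ∈ I := (mem_iff _).mpr hone
  have hIn' : αs ++ x ++ (γ ++ x) ∈ SynSet δ := hIn
  have := P1 δ x hmiss (αs.length + (γ ++ x).length) αs (γ ++ x) le_rfl hIn'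
  rcases this with h | h
  · exfalso
    have : Cs.card = 1 := (mem_iff _).mp h
    omega
  · refine ⟨x ++ (γ ++ x), h, ?_⟩
    have hch : (Fintype.card Q).choose 2 = n * (n - 1) / 2 := by
      rw [hn, Nat.choose_two_right]
    rw [hch] at hγlen
    simp only [List.length_append, hx]
    omega
end

section
/- Let Σ be a finite alphabet, let I ⊆ Σ* be an ideal with ε ∉ I, and let u ∈ I. Then there exists exactly one triple (u', m, v) of words such that u = u'·m·v, m ∈ 𝓜(I), and, writing m = a·z where a is the first letter of m, the word z·v contains no factor belonging to I. (The word m is called the last factor λ(u) of u and z·v its tail τ(u).) -/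
/-- every `u ∈ I` admits a unique factorization `u = u'·m·v` with
`m ∈ 𝓜(I)` such that, writing `m = a·z` with `a` the first letter of `m`, the word
`z·v` contains no factor belonging to `I`. -/
theorem stmt3 {A : Type*} [Fintype A]
    (I : Set (List A)) (hI : IsIdealLang I) (hε : ([] : List A) ∉ I)
    (u : List A) (hu : u ∈ I) :
    ∃! t : List A × List A × List A,
      u = t.1 ++ t.2.1 ++ t.2.2 ∧ t.2.1 ∈ MinWords I ∧
      ∀ w : List A, w <:+: (t.2.1.drop 1 ++ t.2.2) → w ∉ I := by
  classical
  set Q : ℕ → Prop := fun n => ∃ w ∈ I, w <:+: u.drop n with hQdef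
  have hQ0 : Q 0 := ⟨u, hu, by simp⟩
  have hQdown : ∀ a b : ℕ, a ≤ b → Q b → Q a := by
    rintro a b hab ⟨w, hwI, hw⟩
    refine ⟨w, hwI, hw.trans ?_⟩
    have : List.drop (b - a) (u.drop a) = u.drop b := by
      rw [List.drop_drop]; congr 1; omega
    exact (this ▸ List.drop_suffix (b - a) (u.drop a)).isInfix
  have hQtop : ¬ Q u.length := by
    rintro ⟨w, hwI, hw⟩
    rw [List.drop_length] at hw
    exact hε (List.infix_nil.mp hw ▸ hwI)
  have hex : ∃ n, ¬ Q n := ⟨u.length, hQtop⟩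
  set N := Nat.find hex with hNdef
  have hN : ¬ Q N := Nat.find_spec hex
  have hNlt : ∀ k < N, Q k := fun k hk => not_not.mp (Nat.find_min hex hk)
  have hNpos : 0 < N := Nat.pos_of_ne_zero (fun h => hN (h ▸ hQ0))
  set s : List A := u.drop (N - 1) with hsdef
  have htail : s.drop 1 = u.drop N := by
    rw [hsdef, List.drop_drop]; congr 1; omega
  have hnotail : ∀ w ∈ I, ¬ w <:+: s.drop 1 := by
    intro w hwI hw
    exact hN ⟨w, hwI, htail ▸ hw⟩
  obtain ⟨w, hwI, hws⟩ := hNlt (N - 1) (by omega)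
  -- w is a prefix of s
  obtain ⟨x, y, hxy⟩ := hws
  have hwpre : w ++ y = s := by
    cases x with
    | nil => simpa using hxy
    | cons a x' =>
      exfalso
      apply hnotail w hwI
      have : s.drop 1 = x' ++ w ++ y := by
        rw [hsdef, ← hxy]; simp
      exact ⟨x', y, this.symm⟩
  -- shortest prefix of s in I
  have hPex : ∃ k, s.take k ∈ I := ⟨w.length, by rw [← hwpre, List.take_left]; exact hwI⟩
  set K := Nat.find hPex with hKdef
  set m : List A := s.take K with hmdef
  set v : List A := s.drop K with hvdef
  have hmI : m ∈ I := Nat.find_spec hPex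
  have hKpos : 0 < K := by
    rcases Nat.eq_zero_or_pos K with h | h
    · exfalso; apply hε; rw [hmdef, h, List.take_zero] at hmI; exact hmI
    · exact h
  have hKle : K ≤ w.length := Nat.find_min' hPex (by rw [← hwpre, List.take_left]; exact hwI)
  have hKles : K ≤ s.length := hKle.trans (by rw [← hwpre]; simp)
  have hmlen : m.length = K := by rw [hmdef, List.length_take]; omega
  have hmv : m ++ v = s := List.take_append_drop K s
  have hmne : m ≠ [] := by intro h; rw [h] at hmI; exact hε hmI
  have hdrop1 : m.drop 1 ++ v = s.drop 1 := by
    rw [← hmv, List.drop_append_of_le_length (List.length_pos_iff.mpr hmne)]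
  -- minimality of m
  have hmmin : m ∈ MinWords I := by
    refine ⟨hmI, ?_⟩
    rintro (⟨x, w', hx, hw'I, hxw'⟩ | ⟨w', x, hw'I, hx, hw'x⟩)
    · apply hnotail w' hw'I
      have hs' : s = x ++ w' ++ v := by rw [← hmv, hxw', List.append_assoc]
      cases x with
      | nil => exact absurd rfl hx
      | cons a x' =>
        refine ⟨x', v, ?_⟩
        rw [hs']; simp
    · have hlen : w'.length < K := by
        have : m.length = w'.length + x.length := by rw [hw'x]; simp
        have hxlen : 0 < x.length := List.length_pos_iff.mpr hx
        omega
      apply Nat.find_min hPex hlen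
      have : s.take w'.length = w' := by
        have : s = w' ++ (x ++ v) := by rw [← hmv, hw'x]; simp
        rw [this, List.take_left]
      rw [this]; exact hw'I
  have husplit : u = u.take (N - 1) ++ m ++ v := by
    rw [List.append_assoc, hmv, hsdef, List.take_append_drop]
  refine ⟨(u.take (N - 1), m, v), ⟨husplit, hmmin, ?_⟩, ?_⟩
  · intro w' hw' hw'I
    exact hnotail w' hw'I (hdrop1 ▸ hw')
  · rintro ⟨u', m2, v2⟩ ⟨heq, hm2min, hnof⟩
    simp only at heq hnof hm2min ⊢
    have hm2I : m2 ∈ I := hm2min.1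
    have hm2ne : m2 ≠ [] := by intro h; rw [h] at hm2I; exact hε hm2I
    have hdropu' : u.drop u'.length = m2 ++ v2 := by
      rw [heq, List.append_assoc, List.drop_left]
    have hdropu'1 : u.drop (u'.length + 1) = m2.drop 1 ++ v2 := by
      rw [← List.drop_drop (i := 1) (j := u'.length) (l := u), hdropu',
        List.drop_append_of_le_length (List.length_pos_iff.mpr hm2ne)]
    have hQu' : Q u'.length := ⟨m2, hm2I, ⟨[], v2, by rw [hdropu']; simp⟩⟩
    have hnQu'1 : ¬ Q (u'.length + 1) := by
      rintro ⟨w', hw'I, hw'⟩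
      rw [hdropu'1] at hw'
      exact hnof w' hw' hw'I
    have hu'len : u'.length = N - 1 := by
      have h1 : N ≤ u'.length + 1 := Nat.find_min' hex hnQu'1
      have h2 : u'.length < N := by
        by_contra h
        exact hN (hQdown N u'.length (by omega) hQu')
      omega
    have hs2 : m2 ++ v2 = s := by rw [← hdropu', hu'len, hsdef]
    -- m2 = m
    have hm2len : m2.length = K := by
      have hle : K ≤ m2.length :=
        Nat.find_min' hPex (by rw [← hs2, List.take_left]; exact hm2I)
      by_contra h
      have hlt : K < m2.length := by omega
      have htk : m2.take K = m := by
        rw [hmdef, ← hs2, List.take_append_of_le_length hle]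
      refine hm2min.2 (Or.inr ⟨m, m2.drop K, hmI, ?_, by
        rw [← htk, List.take_append_drop]⟩)
      intro hnil
      have := congrArg List.length hnil
      rw [List.length_drop] at this
      simp at this
      omega
    have hm2 : m2 = m := by
      rw [hmdef, ← hm2len, ← hs2, List.take_left]
    have hv2 : v2 = v := by
      refine List.append_cancel_left (?_ : m ++ v2 = m ++ v)
      calc m ++ v2 = s := by rw [← hm2]; exact hs2
        _ = m ++ v := hmv.symm
    have hu' : u' = u.take (N - 1) := by
      rw [← hu'len, heq, List.append_assoc, List.take_left]
    rw [hu', hm2, hv2]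
end

section
/- Let Σ be a finite alphabet, let I ⊆ Σ* be an ideal with ε ∉ I, let u ∈ I, and let (u', m, v) be the unique triple with u = u'·m·v, m ∈ 𝓜(I), m = a·z (a the first letter of m), such that z·v contains no factor belonging to I. Then z·v is the longest suffix of u that does not belong to I, i.e. z·v = τ(u). -/
/-- in the factorization `u = u'·m·v` with `m ∈ 𝓜(I)`, `m = a·z`, and
`z·v` containing no factor in `I`, the word `z·v` is the longest suffix of `u` not
belonging to `I`, i.e. `z·v = τ(u)`. -/
theorem stmt4 {A : Type*} [Fintype A]
    (I : Set (List A)) (hI : IsIdealLang I) (hε : ([] : List A) ∉ I)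
    (u : List A) (hu : u ∈ I)
    (u' mw v : List A) (hfact : u = u' ++ mw ++ v) (hm : mw ∈ MinWords I)
    (hnofac : ∀ w : List A, w <:+: (mw.drop 1 ++ v) → w ∉ I) :
    (mw.drop 1 ++ v) <:+ u ∧ (mw.drop 1 ++ v) ∉ I ∧
      ∀ s : List A, s <:+ u → s ∉ I → s.length ≤ (mw.drop 1 ++ v).length := by
  have hmI : mw ∈ I := hm.1
  have hmne : mw ≠ [] := by rintro rfl; exact hε hmI
  have hsuf : (mw.drop 1 ++ v) <:+ u := by
    rw [hfact]
    exact ⟨u' ++ mw.take 1, by rw [List.append_assoc, ← List.append_assoc (List.take 1 mw), List.take_append_drop, List.append_assoc]⟩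
  refine ⟨hsuf, hnofac _ (List.infix_refl _), ?_⟩
  intro s hs hsI
  by_contra h
  push_neg at h
  have hlen : (mw ++ v).length ≤ s.length := by
    have : mw.length ≥ 1 := List.length_pos_iff.mpr hmne
    simp only [List.length_append, List.length_drop] at h ⊢
    omega
  have hsuf2 : mw ++ v <:+ u := by rw [hfact]; exact ⟨u', by simp [List.append_assoc]⟩
  have hms : mw ++ v <:+ s := by
    rw [← List.reverse_prefix] at hsuf2 hs ⊢
    exact List.prefix_of_prefix_length_le hsuf2 hs (by simp at hlen ⊢; omega)
  obtain ⟨x, rfl⟩ := hms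
  exact hsI (by have := hI x mw v hmI; simpa [List.append_assoc] using this)
end

section
/- Let Σ be a finite alphabet, let I ⊆ Σ* be an ideal with ε ∉ I, and let u ∈ I. Then ι(u) (the shortest suffix of u belonging to I) has exactly one prefix belonging to 𝓜(I), and this prefix equals the last factor λ(u), i.e. the middle term m of the unique factorization u = u'·m·v with m ∈ 𝓜(I) and m.drop 1 ++ v containing no factor in I. -/
/-- `τ(u)`: the longest suffix of `u` not belonging to `I`
(the suffix of `u` of length `k` is `u.drop (u.length - k)`). -/
noncomputable def tailW {A : Type*} (I : Set (List A)) (u : List A) : List A :=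
  u.drop (u.length - sSup {k | k ≤ u.length ∧ u.drop (u.length - k) ∉ I})

/-- `ι(u)`: the suffix of `u` of length `|τ(u)| + 1`,
i.e. the shortest suffix of `u` belonging to `I`. -/
noncomputable def iotaW {A : Type*} (I : Set (List A)) (u : List A) : List A :=
  u.drop (u.length - ((tailW I u).length + 1))

/-- Key properties of `ι(u)`: it belongs to `I`, is a suffix of `u`, and is a suffix of any
suffix of `u` belonging to `I`. -/
lemma iota_spec {A : Type*} (I : Set (List A)) (hI : IsIdealLang I)
    (hε : ([] : List A) ∉ I) (u : List A) (hu : u ∈ I) :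
    iotaW I u ∈ I ∧ iotaW I u <:+ u ∧
      ∀ w : List A, w <:+ u → w ∈ I → iotaW I u <:+ w := by
  set n := u.length with hn
  set S : Set ℕ := {k | k ≤ n ∧ u.drop (n - k) ∉ I} with hSdef
  have hbdd : BddAbove S := ⟨n, fun k hk => hk.1⟩
  have h0 : 0 ∈ S := ⟨Nat.zero_le _, by rw [Nat.sub_zero, hn, List.drop_length]; exact hε⟩
  have hmem : sSup S ∈ S := Nat.sSup_mem ⟨0, h0⟩ hbdd
  set s := sSup S with hs
  have hsn : s < n := by
    rcases lt_or_eq_of_le hmem.1 with h | h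
    · exact h
    · exfalso; apply hmem.2; rw [h]; simpa using hu
  have hiota : iotaW I u = u.drop (n - (s + 1)) := by
    unfold iotaW tailW
    rw [← hn, ← hSdef, ← hs, List.length_drop, Nat.sub_sub_self hmem.1]
  have hιlen : (iotaW I u).length = s + 1 := by
    rw [hiota, List.length_drop]; omega
  have hιI : iotaW I u ∈ I := by
    by_contra h
    rw [hiota] at h
    have h1 : s + 1 ∈ S := ⟨hsn, h⟩
    have := le_csSup hbdd h1
    omega
  have hι_suf : iotaW I u <:+ u := by rw [hiota]; exact List.drop_suffix _ _
  refine ⟨hιI, hι_suf, ?_⟩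
  intro w hw hwI
  have hwlen : s + 1 ≤ w.length := by
    by_contra h
    push_neg at h
    have hwle : w.length ≤ s := by omega
    have hwn : w.length ≤ n := hw.length_le
    have hwd : w = u.drop (n - w.length) := List.suffix_iff_eq_drop.mp hw
    have hsuf : w <:+ u.drop (n - s) := by
      have h2 := List.drop_suffix ((n - w.length) - (n - s)) (u.drop (n - s))
      rw [List.drop_drop] at h2
      have harith : (n - s) + ((n - w.length) - (n - s)) = n - w.length := by omega
      rw [harith] at h2
      rw [hwd]; exact h2
    rcases hsuf with ⟨x, hx⟩
    apply hmem.2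
    rw [← hx]
    have := hI x w [] hwI
    simpa using this
  rcases List.suffix_or_suffix_of_suffix hι_suf hw with h | h
  · exact h
  · have hle := h.length_le
    have : w = iotaW I u := h.eq_of_length (by omega)
    rw [this]

/-- for `u ∈ I`, the word `ι(u)` (the shortest suffix of `u` in `I`) has
exactly one prefix belonging to `𝓜(I)`, and this prefix equals the last factor
`λ(u)`, i.e. the middle term of any factorization `u = u'·m·v` with `m ∈ 𝓜(I)` and
`m.drop 1 ++ v` containing no factor in `I`. -/
theorem stmt5 {A : Type*} [Fintype A]
    (I : Set (List A)) (hI : IsIdealLang I) (hε : ([] : List A) ∉ I)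
    (u : List A) (hu : u ∈ I) :
    (∃! p : List A, p <+: iotaW I u ∧ p ∈ MinWords I) ∧
    ∀ u' mw v : List A, u = u' ++ mw ++ v → mw ∈ MinWords I →
      (∀ w : List A, w <:+: (mw.drop 1 ++ v) → w ∉ I) → mw <+: iotaW I u := by
  obtain ⟨hιI, hιu, hmin⟩ := iota_spec I hI hε u hu
  set ι := iotaW I u with hιdef
  have hproper : ∀ w : List A, w <:+ ι → w ≠ ι → w ∉ I := by
    intro w hw hne hwI
    have h2 := hmin w (hw.trans hιu) hwI
    exact hne (hw.eq_of_length (le_antisymm hw.length_le h2.length_le))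
  constructor
  · classical
    have hT : ∃ k, ι.take k ∈ I := ⟨ι.length, by simpa using hιI⟩
    set t := Nat.find hT with ht
    have htI : ι.take t ∈ I := Nat.find_spec hT
    have htmin : ∀ k, k < t → ι.take k ∉ I := fun k hk => Nat.find_min hT hk
    have hpMin : ι.take t ∈ MinWords I := by
      refine ⟨htI, ?_⟩
      rintro (⟨x, w, hx, hwI, hxw⟩ | ⟨w, x, hwI, hx, hwx⟩)
      · have hi : ι = x ++ (w ++ ι.drop t) := by
          rw [← List.append_assoc, ← hxw, List.take_append_drop]
        have hsuf : (w ++ ι.drop t) <:+ ι := ⟨x, hi.symm⟩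
        have hmemI : w ++ ι.drop t ∈ I := by
          have := hI [] w (ι.drop t) hwI; simpa using this
        have hne : w ++ ι.drop t ≠ ι := by
          intro h
          have hl := congrArg List.length h
          have hl2 := congrArg List.length hi
          simp only [List.length_append] at hl hl2
          have : x.length ≠ 0 := fun h0 => hx (List.length_eq_zero_iff.mp h0)
          omega
        exact hproper _ hsuf hne hmemI
      · have hwlt : w.length < t := by
          have hl := congrArg List.length hwx
          simp only [List.length_take, List.length_append] at hl
          have : x.length ≠ 0 := fun h0 => hx (List.length_eq_zero_iff.mp h0)
          omega
        have hwpre : w <+: ι := by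
          have h1 : w <+: ι.take t := ⟨x, hwx.symm⟩
          exact h1.trans (List.take_prefix _ _)
        have hwtake : w = ι.take w.length := List.prefix_iff_eq_take.mp hwpre
        exact htmin w.length hwlt (hwtake ▸ hwI)
    refine ⟨ι.take t, ⟨List.take_prefix _ _, hpMin⟩, ?_⟩
    rintro q ⟨hqpre, hqI, hqmin⟩
    rcases List.prefix_or_prefix_of_prefix hqpre (List.take_prefix t ι) with h | h
    · rcases h with ⟨x, hx⟩
      by_cases hxe : x = []
      · simp only [hxe, List.append_nil] at hx; exact hx
      · exact absurd (Or.inr ⟨q, x, hqI, hxe, hx.symm⟩) hpMin.2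
    · rcases h with ⟨x, hx⟩
      by_cases hxe : x = []
      · simp only [hxe, List.append_nil] at hx; exact hx.symm
      · exact absurd (Or.inr ⟨ι.take t, x, htI, hxe, hx.symm⟩) hqmin
  · intro u' mw v hufact hmwMin hnofac
    have hmwI : mw ∈ I := hmwMin.1
    have hmwne : mw ≠ [] := by rintro rfl; exact hε hmwI
    have hsufu : mw ++ v <:+ u := ⟨u', by rw [hufact, List.append_assoc]⟩
    have hInI : mw ++ v ∈ I := by have := hI [] mw v hmwI; simpa using this
    have hι : ι <:+ mw ++ v := hmin _ hsufu hInI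
    by_cases he : ι = mw ++ v
    · rw [he]; exact ⟨v, rfl⟩
    · exfalso
      rcases hι with ⟨x, hx⟩
      have hxne : x ≠ [] := by
        rintro rfl; simp only [List.nil_append] at hx; exact he hx
      obtain ⟨a, x', rfl⟩ := List.exists_cons_of_ne_nil hxne
      obtain ⟨b, mw', rfl⟩ := List.exists_cons_of_ne_nil hmwne
      have htail : x' ++ ι = mw' ++ v := by
        have := congrArg List.tail hx
        simpa using this
      exact hnofac ι ⟨x', [], by simpa using htail⟩ hιI
end

section
/- Let Σ be a finite alphabet, let I ⊆ Σ* be an ideal with ε ∉ I, let a ∈ Σ and t ∈ Σ* be such that a·t ∈ I and t ∉ I. Then {v ∈ I : ι(v) = a·t} = {w ++ (a·t) : w ∈ Σ*} = Σ*·(a·t). In particular, each class of words of I sharing the same tail structure is a left ideal of the form Σ*·a·t. -/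
/-- `L` is a left ideal: `Σ*·L ⊆ L`. -/
def IsLeftIdeal {A : Type*} (L : Set (List A)) : Prop :=
  ∀ x w : List A, w ∈ L → x ++ w ∈ L


lemma iota_aux {A : Type*} (I : Set (List A)) (hI : IsIdealLang I)
    (a : A) (t : List A) (hat : a :: t ∈ I) (ht : t ∉ I) (x : List A) :
    iotaW I (x ++ (a :: t)) = a :: t := by
  set v := x ++ (a :: t) with hv
  have hn : v.length = x.length + (t.length + 1) := by simp [hv]
  have hsub : ∀ k, k ≤ t.length → v.drop (v.length - k) = t.drop (t.length - k) := by
    intro k hk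
    have hv2 : v = (x ++ [a]) ++ t := by simp [hv]
    have h1 : v.length - k = (x ++ [a]).length + (t.length - k) := by simp [hn]; omega
    rw [h1, hv2, List.drop_length_add_append]
  have hmem : t.length ∈ {k | k ≤ v.length ∧ v.drop (v.length - k) ∉ I} := by
    constructor
    · omega
    · rw [hsub t.length le_rfl]
      simpa using ht
  have hub : ∀ k ∈ {k | k ≤ v.length ∧ v.drop (v.length - k) ∉ I}, k ≤ t.length := by
    intro k hk
    by_contra hlt
    push_neg at hlt
    apply hk.2
    have h2 : v.length - k ≤ x.length := by omega
    rw [show v = x ++ (a :: t) from hv, List.drop_append_of_le_length h2]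
    have := hI (x.drop (v.length - k)) (a :: t) [] hat
    simpa using this
  have hsSup : sSup {k | k ≤ v.length ∧ v.drop (v.length - k) ∉ I} = t.length := by
    apply le_antisymm
    · exact csSup_le ⟨_, hmem⟩ hub
    · exact le_csSup ⟨t.length, hub⟩ hmem
  have htail : tailW I v = t := by
    rw [tailW, hsSup, hsub t.length le_rfl]
    simp
  rw [iotaW, htail]
  have : v.length - (t.length + 1) = x.length := by omega
  rw [this, hv, List.drop_left]

/-- for `a·t ∈ I` with `t ∉ I`, the class of words of `I` whose shortest
suffix in `I` is `a·t` equals `Σ*·(a·t)`; in particular it is a left ideal. -/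
theorem stmt6 {A : Type*} [Fintype A]
    (I : Set (List A)) (hI : IsIdealLang I) (hε : ([] : List A) ∉ I)
    (a : A) (t : List A) (hat : a :: t ∈ I) (ht : t ∉ I) :
    {v | v ∈ I ∧ iotaW I v = a :: t} = {w | ∃ x : List A, w = x ++ (a :: t)} ∧
    IsLeftIdeal {v | v ∈ I ∧ iotaW I v = a :: t} := by
  have heq : {v | v ∈ I ∧ iotaW I v = a :: t} = {w | ∃ x : List A, w = x ++ (a :: t)} := by
    ext v
    constructor
    · rintro ⟨hvI, hio⟩
      exact ⟨v.take (v.length - ((tailW I v).length + 1)),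
        by rw [← hio]; exact (List.take_append_drop _ _).symm⟩
    · rintro ⟨x, rfl⟩
      refine ⟨?_, iota_aux I hI a t hat ht x⟩
      simpa using hI x (a :: t) [] hat
  refine ⟨heq, ?_⟩
  rw [heq]
  rintro y w ⟨x, rfl⟩
  exact ⟨y ++ x, by simp⟩
end

section
/- Let Σ be a finite alphabet, let I ⊆ Σ* be an ideal with ε ∉ I, and let u ∈ I. If s is a suffix of u with |s| > |ι(u)| (i.e. s strictly longer than the shortest suffix of u belonging to I), then no word of 𝓜(I) has s as a prefix, i.e. the left quotient s⁻¹𝓜(I) = {w : s·w ∈ 𝓜(I)} is empty. -/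
/-- The left quotient `s⁻¹L = {w : s·w ∈ L}`. -/
def lquot {A : Type*} (L : Set (List A)) (s : List A) : Set (List A) := {w | s ++ w ∈ L}

/-- if `s` is a suffix of `u ∈ I` strictly longer than `ι(u)`, then no
word of `𝓜(I)` has `s` as a prefix, i.e. `s⁻¹𝓜(I) = ∅`. -/
theorem stmt7 {A : Type*} [Fintype A]
    (I : Set (List A)) (hI : IsIdealLang I) (hε : ([] : List A) ∉ I)
    (u : List A) (hu : u ∈ I)
    (s : List A) (hs : s <:+ u) (hlen : (iotaW I u).length < s.length) :
    lquot (MinWords I) s = ∅ := by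
  set S : Set ℕ := {k | k ≤ u.length ∧ u.drop (u.length - k) ∉ I} with hS
  have h0 : 0 ∈ S := ⟨Nat.zero_le _, by simpa using hε⟩
  have hbdd : BddAbove S := ⟨u.length, fun k hk => hk.1⟩
  have hmem : sSup S ∈ S := Nat.sSup_mem ⟨0, h0⟩ hbdd
  set m := sSup S with hm
  have hmle : m ≤ u.length := hmem.1
  have hmlt : m < u.length := lt_of_le_of_ne hmle (by
    intro h
    exact hmem.2 (by simpa [h] using hu))
  have htl : (tailW I u).length = m := by
    simp only [tailW, ← hS, ← hm, List.length_drop]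
    omega
  have hiota : iotaW I u = u.drop (u.length - (m + 1)) := by
    simp [iotaW, htl]
  have hiI : iotaW I u ∈ I := by
    rw [hiota]
    by_contra h
    have : m + 1 ∈ S := ⟨hmlt, h⟩
    have := le_csSup hbdd this
    omega
  have hilen : (iotaW I u).length = m + 1 := by
    rw [hiota, List.length_drop]; omega
  have hisuf : iotaW I u <:+ s :=
    List.suffix_of_suffix_length_le (hiota ▸ List.drop_suffix _ _) hs (by omega)
  obtain ⟨x, hx⟩ := hisuf
  have hxne : x ≠ [] := by
    intro h
    rw [h, List.nil_append] at hx
    rw [hx] at hlen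
    exact lt_irrefl _ hlen
  ext w
  simp only [lquot, MinWords, Set.mem_setOf_eq, Set.mem_diff, Set.mem_union,
    Set.mem_empty_iff_false, iff_false]
  rintro ⟨-, hnot⟩
  exact hnot (Or.inl ⟨x, iotaW I u ++ w, hxne, by simpa using hI [] (iotaW I u) w hiI,
    by rw [← hx]; simp⟩)
end

section
/- Let Σ be a finite alphabet, let I ⊆ Σ* be an ideal with ε ∉ I, and let u ∈ I. Then u has a suffix belonging to 𝓜(I) if and only if ι(u) ∈ 𝓜(I) (where ι(u) is the shortest suffix of u belonging to I); moreover u has at most one suffix belonging to 𝓜(I), and when it exists it equals ι(u). -/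
theorem suffix_of_suffix_length_le' {A : Type*} {s t u : List A}
    (hs : s <:+ u) (ht : t <:+ u) (h : t.length ≤ s.length) : t <:+ s := by
  rw [← List.reverse_prefix] at hs ht ⊢
  exact List.prefix_of_prefix_length_le ht hs (by simpa using h)

/-- `u ∈ I` has a suffix in `𝓜(I)` iff `ι(u) ∈ 𝓜(I)`; moreover `u` has
at most one suffix in `𝓜(I)`, and when it exists it equals `ι(u)`. -/
theorem stmt8 {A : Type*} [Fintype A]
    (I : Set (List A)) (hI : IsIdealLang I) (hε : ([] : List A) ∉ I)
    (u : List A) (hu : u ∈ I) :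
    ((∃ s : List A, s <:+ u ∧ s ∈ MinWords I) ↔ iotaW I u ∈ MinWords I) ∧
    ∀ s : List A, s <:+ u → s ∈ MinWords I → s = iotaW I u := by
  set S : Set ℕ := {k | k ≤ u.length ∧ u.drop (u.length - k) ∉ I} with hS
  have h0 : 0 ∈ S := ⟨Nat.zero_le _, by simpa using hε⟩
  have hbdd : BddAbove S := ⟨u.length, fun k hk => hk.1⟩
  set m := sSup S with hm
  have hmS : m ∈ S := Nat.sSup_mem ⟨0, h0⟩ hbdd
  have hm_le : m ≤ u.length := hmS.1
  have hm_lt : m < u.length := by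
    rcases lt_or_eq_of_le hm_le with h | h
    · exact h
    · exfalso; apply hmS.2; simpa [h] using hu
  have htail_len : (tailW I u).length = m := by
    simp [tailW, ← hm, hS, Nat.sub_sub_self hm_le]
    exact Nat.sub_sub_self hm_le
  have hiota : iotaW I u = u.drop (u.length - (m + 1)) := by
    rw [iotaW, htail_len]
  have hiota_suf : iotaW I u <:+ u := by rw [hiota]; exact List.drop_suffix _ _
  have hiota_len : (iotaW I u).length = m + 1 := by
    rw [hiota]; simp [Nat.sub_sub_self hm_lt]
  have hiota_mem : iotaW I u ∈ I := by
    by_contra h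
    have : m + 1 ∈ S := ⟨hm_lt, by rwa [← hiota]⟩
    have := le_csSup hbdd this
    omega
  have hkey : ∀ s : List A, s <:+ u → s ∈ I → iotaW I u <:+ s := by
    intro s hsu hsI
    have hlen : m + 1 ≤ s.length := by
      by_contra h
      push_neg at h
      have h' : s.length ≤ (tailW I u).length := by omega
      have htsuf : tailW I u <:+ u := List.drop_suffix _ _
      obtain ⟨x, hx⟩ := suffix_of_suffix_length_le' htsuf hsu h'
      have ht : tailW I u ∈ I := hx ▸ (by simpa using hI x s [] hsI)
      exact hmS.2 (by simpa [tailW, hS, ← hm] using ht)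
    exact suffix_of_suffix_length_le' hsu hiota_suf (by omega)
  have huniq : ∀ s : List A, s <:+ u → s ∈ MinWords I → s = iotaW I u := by
    intro s hsu hsM
    obtain ⟨x, hx⟩ := hkey s hsu hsM.1
    rcases eq_or_ne x [] with rfl | hx0
    · simpa using hx.symm
    · exact absurd (Or.inl ⟨x, iotaW I u, hx0, hiota_mem, hx.symm⟩) hsM.2
  refine ⟨⟨fun ⟨s, hsu, hsM⟩ => huniq s hsu hsM ▸ hsM, fun h => ⟨_, hiota_suf, h⟩⟩, huniq⟩
end

section
/- Let Σ be a finite alphabet and let I ⊆ Σ* be a nonempty ideal with ε ∉ I. Then the set of all tails of elements of I satisfies {τ(u) : u ∈ I} = ⋃_{a ∈ Σ} ((a⁻¹𝓜(I))·Σ* \ I), where a⁻¹𝓜(I) = {z : a·z ∈ 𝓜(I)} is the left quotient of 𝓜(I) by the letter a. -/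
/-- the set of all tails of elements of a nonempty ideal `I` (with
`ε ∉ I`) equals `⋃_{a ∈ Σ} ((a⁻¹𝓜(I))·Σ* \ I)`. -/
theorem stmt9 {A : Type*} [Fintype A]
    (I : Set (List A)) (hI : IsIdealLang I) (hε : ([] : List A) ∉ I)
    (hne : I.Nonempty) :
    {t | ∃ u ∈ I, tailW I u = t} =
      ⋃ a : A, ({w | ∃ z v : List A, a :: z ∈ MinWords I ∧ w = z ++ v} \ I) := by
  have hsuffix : ∀ (l : List A) (i : ℕ), l.drop i ∈ I → l ∈ I := by
    intro l i h
    have := hI (l.take i) (l.drop i) [] h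
    simpa using this
  ext t
  simp only [Set.mem_setOf_eq, Set.mem_iUnion, Set.mem_diff, Set.mem_setOf_eq]
  constructor
  · rintro ⟨u, huI, rfl⟩
    set n := u.length with hn
    set S : Set ℕ := {k | k ≤ n ∧ u.drop (n - k) ∉ I} with hS
    have hbdd : BddAbove S := ⟨n, fun k hk => hk.1⟩
    have h0 : 0 ∈ S := ⟨Nat.zero_le n, by simp [hn, List.drop_length, hε]⟩
    have hSne : S.Nonempty := ⟨0, h0⟩
    set k := sSup S with hk
    have hkS : k ∈ S := Nat.sSup_mem hSne hbdd
    have hkn : k ≤ n := hkS.1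
    set t := u.drop (n - k) with ht
    have htI : t ∉ I := hkS.2
    have htail : tailW I u = t := rfl
    have htlen : t.length = k := by rw [ht, List.length_drop]; omega
    have hklt : k < n := by
      rcases Nat.lt_or_ge k n with h | h
      · exact h
      · exfalso; apply htI
        have : n - k = 0 := by omega
        rw [ht, this]; simpa using huI
    -- suffix of length k+1 is in I
    have hk1 : k + 1 ∉ S := fun h => by
      have := le_csSup hbdd h; omega
    have hiota : u.drop (n - (k + 1)) ∈ I := by
      by_contra h
      exact hk1 ⟨by omega, h⟩
    set ι := u.drop (n - (k + 1)) with hι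
    have hidx : n - (k + 1) < u.length := by omega
    have hcons : ι = u[n - (k + 1)] :: t := by
      rw [hι, List.drop_eq_getElem_cons hidx, ht]
      congr 2
      omega
    set a := u[n - (k + 1)] with ha
    -- suffixes of t are not in I
    have hsufft : ∀ i, t.drop i ∉ I := fun i h => htI (hsuffix t i h)
    -- shortest prefix of ι in I
    set S' : Set ℕ := {i | ι.take i ∈ I} with hS'
    have hS'ne : S'.Nonempty := ⟨ι.length, by simpa [hS'] using hiota⟩
    set j := sInf S' with hj
    have hjI : ι.take j ∈ I := Nat.sInf_mem hS'ne
    have hjlen : j ≤ ι.length := Nat.sInf_le (by simpa [hS'] using hiota)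
    have hj0 : j ≠ 0 := by
      intro h
      rw [h] at hjI
      simp at hjI
      exact hε hjI
    clear_value j
    obtain ⟨j', rfl⟩ : ∃ j', j = j' + 1 := ⟨j - 1, by omega⟩
    have hιlen : ι.length = k + 1 := by simp [hι, hn]; omega
    have hm : ι.take (j' + 1) = a :: t.take j' := by
      rw [hcons]; rfl
    have hmin : a :: t.take j' ∈ MinWords I := by
      constructor
      · rw [← hm]; exact hjI
      · rintro (⟨x, w, hx, hwI, heq⟩ | ⟨w, x, hwI, hx, heq⟩)
        · -- proper suffix w of m in I ⇒ suffix of t in I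
          have hdec : ι = x ++ (w ++ ι.drop (j' + 1)) := by
            conv_lhs => rw [← List.take_append_drop (j' + 1) ι]
            rw [hm, heq, List.append_assoc]
          have hwd : w ++ ι.drop (j' + 1) ∈ I := by
            have := hI [] w (ι.drop (j' + 1)) hwI
            simpa using this
          obtain ⟨i, hi⟩ : ∃ i, x.length = i + 1 := by
            cases x with
            | nil => exact absurd rfl hx
            | cons b l => exact ⟨l.length, rfl⟩
          have : w ++ ι.drop (j' + 1) = t.drop i := by
            have h1 : ι.drop x.length = w ++ ι.drop (j' + 1) := by
              conv_lhs => rw [hdec]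
              exact List.drop_left
            rw [← h1, hcons, hi, List.drop_succ_cons]
          rw [this] at hwd
          exact hsufft i hwd
        · -- proper prefix w of m in I ⇒ contradiction with minimality of j
          have hmlen : (ι.take (j' + 1)).length = j' + 1 := by
            rw [List.length_take]; omega
          have hwlt : w.length < j' + 1 := by
            have : (ι.take (j' + 1)).length = w.length + x.length := by
              rw [hm, heq]; simp
            have hx' : x.length ≠ 0 := fun h => hx (List.eq_nil_of_length_eq_zero h)
            omega
          have hwtake : ι.take w.length = w := by
            have h1 : (ι.take (j' + 1)).take w.length = w := by
              rw [hm, heq]; exact List.take_left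
            rw [List.take_take] at h1
            rwa [min_eq_left (by omega)] at h1
          have : w.length ∈ S' := by rw [hS']; simpa [hwtake] using hwI
          have := Nat.sInf_le this
          rw [← hj] at this
          omega
    refine ⟨a, ⟨t.take j', t.drop j', hmin, (List.take_append_drop j' t).symm⟩, htI⟩
  · rintro ⟨a, ⟨z, v, hmin, rfl⟩, htI⟩
    set t := z ++ v with htdef
    refine ⟨a :: t, ?_, ?_⟩
    · have := hI [] (a :: z) v hmin.1
      simpa [htdef] using this
    · -- compute the tail of a :: t
      set u := a :: t with hu
      have huI : u ∈ I := by
        have := hI [] (a :: z) v hmin.1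
        simpa [hu, htdef] using this
      have hn : u.length = t.length + 1 := by simp [hu]
      set S : Set ℕ := {k | k ≤ u.length ∧ u.drop (u.length - k) ∉ I} with hS
      have hbdd : BddAbove S := ⟨u.length, fun k hk => hk.1⟩
      have htmem : t.length ∈ S := by
        refine ⟨by omega, ?_⟩
        have : u.length - t.length = 1 := by omega
        rw [this]
        simpa [hu] using htI
      have hub : ∀ k ∈ S, k ≤ t.length := by
        intro k hk
        rcases Nat.lt_or_ge k u.length with h | h
        · omega
        · exfalso
          have hke : k = u.length := le_antisymm hk.1 h
          apply hk.2
          rw [hke, Nat.sub_self]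
          simpa using huI
      have hsup : sSup S = t.length :=
        le_antisymm (csSup_le ⟨_, htmem⟩ hub) (le_csSup hbdd htmem)
      show u.drop (u.length - sSup S) = t
      rw [hsup]
      have : u.length - t.length = 1 := by omega
      rw [this, hu, List.drop_succ_cons, List.drop_zero]
end

section
/- Let Σ be a finite alphabet with at least two letters and let I ⊆ Σ* be a nonempty ideal with ε ∉ I. Then the tail structure family 𝒯(I) = { Σ*·ι(u) : u ∈ I } (equivalently, the family of all sets Σ*·w where w ∈ 𝓜(I)·Σ* and the word w with its first letter removed does not belong to I) is a reset left decomposition of I. -/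
/-- A reset left decomposition of an ideal `I`: a collection of pairwise disjoint
nonempty left ideals whose union is `I`, such that (i) for every letter `a` and
every member `J` there is a member `J'` with `J·a ⊆ J'`, and (ii) for every word
`u`, if `I·u ⊆ J` for some member `J` then `u ∈ I`. -/
def IsResetLeftDecomp {A : Type*} (I : Set (List A)) (F : Set (Set (List A))) : Prop :=
  (∀ J ∈ F, J.Nonempty) ∧
  (∀ J ∈ F, IsLeftIdeal J) ∧
  (F.PairwiseDisjoint id) ∧
  (⋃₀ F = I) ∧
  (∀ a : A, ∀ J ∈ F, ∃ J' ∈ F, ∀ w ∈ J, w ++ [a] ∈ J') ∧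
  (∀ u : List A, (∃ J ∈ F, ∀ v ∈ I, v ++ u ∈ J) → u ∈ I)

namespace Stmt10Aux

variable {A : Type*} {I : Set (List A)}

lemma mem_of_suffix (hI : IsIdealLang I) {s w : List A} (h : s <:+ w) (hs : s ∈ I) : w ∈ I := by
  obtain ⟨t, rfl⟩ := h
  simpa using hI t s [] hs

lemma iota_spec (hI : IsIdealLang I) (hε : ([] : List A) ∉ I) {u : List A} (hu : u ∈ I) :
    iotaW I u <:+ u ∧ iotaW I u ∈ I ∧ iotaW I u ≠ [] ∧
      ∀ s, s <:+ u → s ∈ I → iotaW I u <:+ s := by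
  set S : Set ℕ := {k | k ≤ u.length ∧ u.drop (u.length - k) ∉ I} with hS
  set m : ℕ := sSup S with hm
  have h0 : 0 ∈ S := ⟨Nat.zero_le _, by simpa [List.drop_length] using hε⟩
  have hbdd : BddAbove S := ⟨u.length, fun k hk => hk.1⟩
  have hmS : m ∈ S := Nat.sSup_mem ⟨0, h0⟩ hbdd
  have hmle : m ≤ u.length := hmS.1
  have hmlt : m < u.length := by
    rcases lt_or_eq_of_le hmle with h | h
    · exact h
    · exact absurd (by simpa [h] using hu) hmS.2
  have hlen_tail : (tailW I u).length = m := by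
    rw [tailW, List.length_drop, ← hS, ← hm]; omega
  have hiota : iotaW I u = u.drop (u.length - (m + 1)) := by
    rw [iotaW, hlen_tail]
  have hlen_iota : (iotaW I u).length = m + 1 := by
    rw [hiota, List.length_drop]; omega
  have hiota_mem : iotaW I u ∈ I := by
    by_contra h
    have h1 : m + 1 ∈ S := ⟨by omega, by rwa [← hiota]⟩
    have := le_csSup hbdd h1
    omega
  refine ⟨hiota ▸ List.drop_suffix _ _, hiota_mem,
    fun h => by simp [h] at hlen_iota, ?_⟩
  intro s hs hsI
  have hs_eq : u.drop (u.length - s.length) = s := by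
    obtain ⟨t, rfl⟩ := hs
    rw [List.length_append, Nat.add_sub_cancel, List.drop_left]
  have hsle : s.length ≤ u.length := hs.length_le
  have hslen : m + 1 ≤ s.length := by
    by_contra h
    push_neg at h
    have htail : s <:+ u.drop (u.length - m) := by
      have : (u.drop (u.length - m)).drop ((u.length - s.length) - (u.length - m))
          = u.drop (u.length - s.length) := by
        rw [List.drop_drop]; congr 1; omega
      rw [← hs_eq, ← this]
      exact List.drop_suffix _ _
    exact hmS.2 (mem_of_suffix hI htail hsI)
  have h2 : (u.drop (u.length - s.length)).drop (s.length - (m + 1))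
      = u.drop (u.length - (m + 1)) := by
    rw [List.drop_drop]; congr 1; omega
  rw [← hs_eq, hiota, ← h2]
  exact List.drop_suffix _ _

end Stmt10Aux

open Stmt10Aux

/-- the tail structure family `𝒯(I) = {Σ*·ι(u) : u ∈ I}` is a reset
left decomposition of `I`. -/
theorem stmt10 {A : Type*} [Fintype A] (hA : 1 < Fintype.card A)
    (I : Set (List A)) (hI : IsIdealLang I) (hε : ([] : List A) ∉ I)
    (hne : I.Nonempty) :
    IsResetLeftDecomp I
      {J | ∃ u ∈ I, J = {w : List A | ∃ x : List A, w = x ++ iotaW I u}} := by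
  set F : Set (Set (List A)) :=
    {J | ∃ u ∈ I, J = {w : List A | ∃ x : List A, w = x ++ iotaW I u}} with hF
  -- members of J are exactly the words having iotaW I u as suffix
  have hmemJ : ∀ u : I, ∀ w : List A,
      (w ∈ {w : List A | ∃ x : List A, w = x ++ iotaW I u.1} ↔ iotaW I u.1 <:+ w) := by
    intro u w
    constructor
    · rintro ⟨x, rfl⟩; exact ⟨x, rfl⟩
    · rintro ⟨x, rfl⟩; exact ⟨x, rfl⟩
  refine ⟨?_, ?_, ?_, ?_, ?_, ?_⟩
  · -- nonempty
    rintro J ⟨u, hu, rfl⟩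
    exact ⟨iotaW I u, ⟨[], rfl⟩⟩
  · -- left ideal
    rintro J ⟨u, hu, rfl⟩ x w ⟨y, rfl⟩
    exact ⟨x ++ y, by rw [List.append_assoc]⟩
  · -- pairwise disjoint
    rintro J ⟨u, hu, rfl⟩ K ⟨v, hv, rfl⟩ hJK
    obtain ⟨_, hiu, _, hminu⟩ := iota_spec hI hε hu
    obtain ⟨_, hiv, _, hminv⟩ := iota_spec hI hε hv
    simp only [Function.onFun, id_eq]
    rw [Set.disjoint_left]
    rintro w ⟨x, rfl⟩ ⟨y, hy⟩
    have h1 : iotaW I u <:+ x ++ iotaW I u := List.suffix_append _ _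
    have h2 : iotaW I v <:+ x ++ iotaW I u := hy ▸ List.suffix_append _ _
    have heq : iotaW I u = iotaW I v := by
      rcases List.suffix_or_suffix_of_suffix h1 h2 with h | h
      · have h3 := hminv _ (h.trans (iota_spec hI hε hv).1) hiu
        exact (h3.sublist.eq_of_length (le_antisymm h3.length_le h.length_le)).symm
      · have h3 := hminu _ (h.trans (iota_spec hI hε hu).1) hiv
        exact h3.sublist.eq_of_length (le_antisymm h3.length_le h.length_le)
    exact hJK (by rw [heq])
  · -- union = I
    ext w
    constructor
    · rintro ⟨J, ⟨u, hu, rfl⟩, x, rfl⟩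
      exact mem_of_suffix hI (List.suffix_append _ _) (iota_spec hI hε hu).2.1
    · intro hw
      refine ⟨{v : List A | ∃ x : List A, v = x ++ iotaW I w}, ⟨w, hw, rfl⟩, ?_⟩
      obtain ⟨x, hx⟩ := (iota_spec hI hε hw).1
      exact ⟨x, hx.symm⟩
  · -- letter action
    intro a J hJ
    obtain ⟨u, hu, rfl⟩ := hJ
    have hua : u ++ [a] ∈ I := by simpa using hI [] u [a] hu
    refine ⟨{w : List A | ∃ x : List A, w = x ++ iotaW I (u ++ [a])}, ⟨u ++ [a], hua, rfl⟩, ?_⟩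
    rintro w ⟨x, rfl⟩
    have hsuf : iotaW I (u ++ [a]) <:+ iotaW I u ++ [a] := by
      refine (iota_spec hI hε hua).2.2.2 _ ?_ ?_
      · obtain ⟨t, ht⟩ := (iota_spec hI hε hu).1
        exact ⟨t, by rw [← List.append_assoc, ht]⟩
      · simpa using hI [] (iotaW I u) [a] (iota_spec hI hε hu).2.1
    obtain ⟨y, hy⟩ := hsuf
    exact ⟨x ++ y, by rw [List.append_assoc x y, hy, List.append_assoc]⟩
  · -- reset condition
    intro u hu
    obtain ⟨J, ⟨v, hv, rfl⟩, hJ⟩ := hu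
    set s : List A := iotaW I v with hs
    obtain ⟨_, hsI, hsne, _⟩ := iota_spec hI hε hv
    obtain ⟨v₀, hv₀⟩ := hne
    by_cases hcase : s.length ≤ u.length
    · -- s fits inside u
      obtain ⟨x, hx⟩ := hJ v₀ hv₀
      have h1 : s <:+ v₀ ++ u := ⟨x, hx.symm⟩
      have h2 : u <:+ v₀ ++ u := List.suffix_append _ _
      rcases List.suffix_or_suffix_of_suffix h1 h2 with h | h
      · exact mem_of_suffix hI h hsI
      · have : u = s := h.sublist.eq_of_length (le_antisymm h.length_le hcase)
        exact this ▸ hsI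
    · push_neg at hcase
      obtain ⟨a, b, hab⟩ := Fintype.exists_pair_of_one_lt_card hA
      -- helper: for any letter c, get the prefix t of s with t ++ u = s being replicate
      have key : ∀ c : A, ∀ t : List A, t ++ u = s → t = List.replicate t.length c := by
        intro c t ht
        have hvc : v₀ ++ List.replicate s.length c ∈ I := by
          simpa using hI [] v₀ (List.replicate s.length c) hv₀
        obtain ⟨x, hx⟩ := hJ _ hvc
        have h1 : t ++ u <:+ (v₀ ++ List.replicate s.length c) ++ u := by
          rw [ht]; exact ⟨x, hx.symm⟩
        obtain ⟨y, hy⟩ := h1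
        rw [← List.append_assoc] at hy
        have hy2 : y ++ t = v₀ ++ List.replicate s.length c := List.append_cancel_right hy
        have htsuf : t <:+ v₀ ++ List.replicate s.length c := ⟨y, hy2⟩
        have hrep : (List.replicate s.length c : List A) <:+ v₀ ++ List.replicate s.length c :=
          List.suffix_append _ _
        have htlen : t.length ≤ s.length := by
          have h5 : t.length + u.length = s.length := by
            rw [← ht, List.length_append]
          omega
        have hall : ∀ x ∈ t, x = c := by
          rcases List.suffix_or_suffix_of_suffix htsuf hrep with h | h
          · intro x hx'
            exact List.eq_of_mem_replicate (h.sublist.subset hx')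
          · have hle := h.length_le
            simp only [List.length_replicate] at hle
            have : t = List.replicate s.length c := by
              refine (h.sublist.eq_of_length ?_).symm
              simp only [List.length_replicate]
              omega
            intro x hx'
            rw [this] at hx'
            exact List.eq_of_mem_replicate hx'
        exact List.eq_replicate_of_mem hall
      -- u is a suffix of s
      obtain ⟨x, hx⟩ := hJ v₀ hv₀
      have h1 : s <:+ v₀ ++ u := ⟨x, hx.symm⟩
      have h2 : u <:+ v₀ ++ u := List.suffix_append _ _
      have husuf : u <:+ s := by
        rcases List.suffix_or_suffix_of_suffix h2 h1 with h | h
        · exact h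
        · exact absurd h.length_le (by omega)
      obtain ⟨t, ht⟩ := husuf
      have hta := key a t ht
      have htb := key b t ht
      have htlen : 0 < t.length := by
        have h5 : t.length + u.length = s.length := by
          rw [← ht, List.length_append]
        omega
      have : a = b := by
        have hmem : a ∈ t := by
          rw [hta]
          exact List.mem_replicate.2 ⟨by omega, rfl⟩
        rw [htb] at hmem
        exact List.eq_of_mem_replicate hmem
      exact absurd this hab
end

section
/- Let Σ be a finite alphabet with at least two letters, let I ⊆ Σ* be a nonempty ideal with ε ∉ I, and let 𝒯(I) = { Σ*·ι(u) : u ∈ I } be the tail structure family. Then for every reset left decomposition 𝓓 of I and every u ∈ I, there is a unique J ∈ 𝓓 with Σ*·ι(u) ⊆ J; moreover the resulting map 𝒯(I) → 𝓓 (sending each member of 𝒯(I) to the unique member of 𝓓 containing it) is surjective. -/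
lemma iota_mem {A : Type*} (I : Set (List A)) (hε : ([] : List A) ∉ I)
    {u : List A} (hu : u ∈ I) :
    iotaW I u ∈ I ∧ ∃ x : List A, u = x ++ iotaW I u := by
  set n := u.length with hn
  set S : Set ℕ := {k | k ≤ n ∧ u.drop (n - k) ∉ I} with hS
  have h0 : 0 ∈ S := by
    simp only [hS, Set.mem_setOf_eq]
    constructor
    · exact Nat.zero_le n
    · simpa [hn, List.drop_length] using hε
  have hbdd : BddAbove S := ⟨n, fun k hk => hk.1⟩
  have hsmem : sSup S ∈ S := Nat.sSup_mem ⟨0, h0⟩ hbdd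
  set s := sSup S with hs
  have hsn : s < n := by
    rcases lt_or_eq_of_le hsmem.1 with h | h
    · exact h
    · exfalso; have := hsmem.2; rw [h] at this; simp at this; exact this hu
  have htail : (tailW I u).length = s := by
    rw [tailW]
    simp [List.length_drop, Nat.sub_sub_self (le_of_lt hsn)]
    exact Nat.sub_sub_self (le_of_lt hsn)
  have hiota : iotaW I u = u.drop (n - (s + 1)) := by
    rw [iotaW, htail]
  have hmem : iotaW I u ∈ I := by
    by_contra h
    have : s + 1 ∈ S := ⟨hsn, by rwa [← hiota]⟩
    have := le_csSup hbdd this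
    omega
  exact ⟨hmem, u.take (n - (s + 1)), by rw [hiota, List.take_append_drop]⟩

/-- for every reset left decomposition `𝓓` of `I` and every `u ∈ I`
there is a unique `J ∈ 𝓓` containing `Σ*·ι(u)`, and the resulting map `𝒯(I) → 𝓓`
is surjective. -/
theorem stmt11 {A : Type*} [Fintype A] (hA : 1 < Fintype.card A)
    (I : Set (List A)) (hI : IsIdealLang I) (hε : ([] : List A) ∉ I)
    (hne : I.Nonempty)
    (D : Set (Set (List A))) (hD : IsResetLeftDecomp I D) :
    (∀ u ∈ I, ∃! J : Set (List A),
        J ∈ D ∧ {w : List A | ∃ x : List A, w = x ++ iotaW I u} ⊆ J) ∧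
    (∀ J ∈ D, ∃ u ∈ I, {w : List A | ∃ x : List A, w = x ++ iotaW I u} ⊆ J) := by
  obtain ⟨hne', hleft, hdisj, hunion, _, _⟩ := hD
  have key : ∀ u ∈ I, ∀ J ∈ D, iotaW I u ∈ J →
      {w : List A | ∃ x : List A, w = x ++ iotaW I u} ⊆ J := by
    rintro u hu J hJ hiJ w ⟨x, rfl⟩
    exact hleft J hJ x _ hiJ
  have uniq : ∀ v : List A, ∀ J ∈ D, ∀ J' ∈ D, v ∈ J → v ∈ J' → J = J' := by
    intro v J hJ J' hJ' hv hv'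
    by_contra h
    exact Set.disjoint_left.mp (hdisj hJ hJ' h) hv hv'
  constructor
  · intro u hu
    obtain ⟨hmem, x, hx⟩ := iota_mem I hε hu
    have : iotaW I u ∈ ⋃₀ D := hunion ▸ hmem
    obtain ⟨J, hJ, hvJ⟩ := this
    refine ⟨J, ⟨hJ, key u hu J hJ hvJ⟩, ?_⟩
    rintro J' ⟨hJ', hsub⟩
    exact uniq _ J' hJ' J hJ (hsub ⟨[], rfl⟩) hvJ
  · intro J hJ
    obtain ⟨w, hwJ⟩ := hne' J hJ
    have hwI : w ∈ I := hunion ▸ Set.mem_sUnion.mpr ⟨J, hJ, hwJ⟩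
    obtain ⟨hmem, x, hx⟩ := iota_mem I hε hwI
    have : iotaW I w ∈ ⋃₀ D := hunion ▸ hmem
    obtain ⟨J'', hJ'', hvJ⟩ := this
    have hwJ'' : w ∈ J'' := by rw [hx]; exact hleft J'' hJ'' x _ hvJ
    have : J'' = J := uniq w J'' hJ'' J hJ hwJ'' hwJ
    exact ⟨w, hwI, this ▸ key w hwI J'' hJ'' hvJ⟩
end

section
/- Let Σ be a finite alphabet and let 𝒜 = (Q, δ) be a strongly connected synchronizing automaton over Σ (Q nonempty, possibly infinite). For each q ∈ Q let I_q = {u ∈ Σ* : p·u = q for all p ∈ Q}. Then the family {I_q : q ∈ Q, I_q ≠ ∅} consists of pairwise disjoint nonempty left ideals, every I_q (q ∈ Q) is nonempty, and this family is a reset left decomposition of the ideal Syn(𝒜). -/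
/-- for a strongly connected synchronizing automaton (with a possibly
infinite state set), each `I_q = {u : p·u = q for all p}` is nonempty, and the family
of the nonempty `I_q`'s is a reset left decomposition of `Syn(𝒜)`. -/
theorem stmt12 {A Q : Type*} [Fintype A] [Nonempty Q]
    (δ : Q → A → Q)
    (hsc : ∀ p q : Q, ∃ w : List A, actW δ p w = q)
    (hsync : (SynSet δ).Nonempty) :
    (∀ q : Q, {u : List A | ∀ p : Q, actW δ p u = q}.Nonempty) ∧
    IsResetLeftDecomp (SynSet δ)
      {J | (∃ q : Q, J = {u : List A | ∀ p : Q, actW δ p u = q}) ∧ J.Nonempty} := by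
  have hact : ∀ (p : Q) (x y : List A), actW δ p (x ++ y) = actW δ (actW δ p x) y := by
    intro p x y; simp [actW, List.foldl_append]
  -- each I_q is nonempty
  have hne : ∀ q : Q, {u : List A | ∀ p : Q, actW δ p u = q}.Nonempty := by
    intro q
    obtain ⟨w, q0, hw⟩ := hsync
    obtain ⟨v, hv⟩ := hsc q0 q
    exact ⟨w ++ v, fun p => by rw [hact, hw p, hv]⟩
  refine ⟨hne, ?_, ?_, ?_, ?_, ?_, ?_⟩
  · rintro J ⟨-, hJ⟩; exact hJ
  · rintro J ⟨⟨q, rfl⟩, -⟩ x w hw p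
    rw [hact]; exact hw _
  · rintro J ⟨⟨q, rfl⟩, -⟩ J' ⟨⟨q', rfl⟩, -⟩ hJJ'
    refine Set.disjoint_left.2 fun u hu hu' => hJJ' ?_
    obtain ⟨p⟩ := ‹Nonempty Q›
    have : q = q' := by rw [← hu p, hu' p]
    subst this; rfl
  · ext u
    constructor
    · rintro ⟨J, ⟨⟨q, rfl⟩, -⟩, hu⟩
      exact ⟨q, hu⟩
    · rintro ⟨q, hq⟩
      exact ⟨_, ⟨⟨q, rfl⟩, ⟨u, hq⟩⟩, hq⟩
  · rintro a J ⟨⟨q, rfl⟩, -⟩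
    refine ⟨{u : List A | ∀ p : Q, actW δ p u = δ q a}, ⟨⟨_, rfl⟩, hne _⟩, ?_⟩
    intro w hw p
    rw [hact, hw p]; rfl
  · rintro u ⟨J, ⟨⟨q, rfl⟩, -⟩, hu⟩
    refine ⟨q, fun p => ?_⟩
    obtain ⟨v0, t0, hv0⟩ := hsync
    obtain ⟨w, hw⟩ := hsc t0 p
    have hvw : v0 ++ w ∈ SynSet δ := ⟨p, fun p' => by rw [hact, hv0 p', hw]⟩
    have := hu _ hvw p
    rw [hact, hact, hv0 p, hw] at this
    exact this
end

section
/- Let Σ be a finite alphabet, let I ⊆ Σ* be an ideal, and let 𝓘 be a nonempty reset left decomposition of I. Then for every J ∈ 𝓘 and a ∈ Σ there is a unique J' ∈ 𝓘 with J·a ⊆ J', so that 𝒜(𝓘) = (𝓘, δ) with δ(J, a) = this unique J' is a well-defined automaton; moreover 𝒜(𝓘) is strongly connected, synchronizing, and Syn(𝒜(𝓘)) = I. -/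
/-- for a nonempty reset left decomposition `𝓘` of an ideal `I`, each
`J ∈ 𝓘` and `a ∈ Σ` determine a unique `J' ∈ 𝓘` with `J·a ⊆ J'`; the resulting
automaton on `𝓘` is strongly connected, synchronizing, and its set of reset words
is exactly `I`. -/
theorem stmt13 {A : Type*} [Fintype A]
    (I : Set (List A)) (hI : IsIdealLang I)
    (F : Set (Set (List A))) (hF : IsResetLeftDecomp I F) (hne : F.Nonempty) :
    (∀ J ∈ F, ∀ a : A, ∃! J' : Set (List A), J' ∈ F ∧ ∀ w ∈ J, w ++ [a] ∈ J') ∧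
    ∃ δ : F → A → F,
      (∀ (J : F) (a : A), ∀ w ∈ (J : Set (List A)), w ++ [a] ∈ (δ J a : Set (List A))) ∧
      (∀ p q : F, ∃ w : List A, actW δ p w = q) ∧
      SynSet δ = I := by
  obtain ⟨hnonempty, hleft, hdisj, hunion, hstep, hresetc⟩ := hF
  have heq : ∀ J₁ ∈ F, ∀ J₂ ∈ F, ∀ x : List A, x ∈ J₁ → x ∈ J₂ → J₁ = J₂ := by
    intro J₁ h1 J₂ h2 x hx1 hx2
    by_contra h
    exact Set.disjoint_left.mp (hdisj h1 h2 h) hx1 hx2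
  have huniq : ∀ J ∈ F, ∀ a : A, ∃! J' : Set (List A), J' ∈ F ∧ ∀ w ∈ J, w ++ [a] ∈ J' := by
    intro J hJ a
    obtain ⟨J', hJ', hsub⟩ := hstep a J hJ
    refine ⟨J', ⟨hJ', hsub⟩, ?_⟩
    rintro J'' ⟨hJ'', hsub''⟩
    obtain ⟨w, hw⟩ := hnonempty J hJ
    exact heq J'' hJ'' J' hJ' _ (hsub'' w hw) (hsub w hw)
  refine ⟨huniq, ?_⟩
  choose δ0 hδmem hδprop using fun (J : F) (a : A) => hstep a J.1 J.2
  set δ : F → A → F := fun J a => ⟨δ0 J a, hδmem J a⟩ with hδdef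
  have hext : ∀ (u : List A) (J : F) (w : List A), w ∈ (J : Set (List A)) →
      w ++ u ∈ (actW δ J u).1 := by
    intro u
    induction u with
    | nil => intro J w hw; simpa [actW] using hw
    | cons a u ih =>
      intro J w hw
      have h1 : w ++ [a] ∈ (δ J a : Set (List A)) := hδprop J a w hw
      have h2 := ih (δ J a) (w ++ [a]) h1
      simpa [actW] using h2
  refine ⟨δ, fun J a w hw => hδprop J a w hw, ?_, ?_⟩
  · intro p q
    obtain ⟨v, hv⟩ := hnonempty q.1 q.2
    obtain ⟨w0, hw0⟩ := hnonempty p.1 p.2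
    refine ⟨v, Subtype.ext (heq _ (actW δ p v).2 _ q.2 (w0 ++ v)
      (hext v p w0 hw0) (hleft q.1 q.2 w0 v hv))⟩
  · ext u
    constructor
    · rintro ⟨q, hq⟩
      apply hresetc u
      refine ⟨q.1, q.2, fun v hv => ?_⟩
      rw [← hunion] at hv
      obtain ⟨J, hJ, hvJ⟩ := hv
      have := hext u ⟨J, hJ⟩ v hvJ
      rwa [hq ⟨J, hJ⟩] at this
    · intro hu
      have hu' : u ∈ ⋃₀ F := hunion ▸ hu
      obtain ⟨J₀, hJ₀, huJ₀⟩ := hu'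
      refine ⟨⟨J₀, hJ₀⟩, fun p => ?_⟩
      obtain ⟨w, hw⟩ := hnonempty p.1 p.2
      exact Subtype.ext (heq _ (actW δ p u).2 _ hJ₀ (w ++ u)
        (hext u p w hw) (hleft J₀ hJ₀ w u huJ₀))
end

section
/- Let Σ be a finite alphabet with at least two letters and let I ⊆ Σ* be any nonempty ideal (not necessarily regular) with ε ∉ I. Then there exists a strongly connected synchronizing automaton 𝒜 (with a possibly countably infinite set of states) over Σ such that Syn(𝒜) = I. -/
/- ### Auxiliary development -/

open Classical in
/-- `sigmaI I h` is the longest suffix `y` of `h` such that `y.tail ∉ I`. -/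
noncomputable def sigmaI {A : Type} (I : Set (List A)) : List A → List A
  | [] => []
  | c :: h => if h ∈ I then sigmaI I h else c :: h

section Aux

variable {A : Type} {I : Set (List A)}

theorem ideal_append_left (hI : IsIdealLang I) {u : List A} (x : List A) (hu : u ∈ I) :
    x ++ u ∈ I := by
  have := hI x u [] hu
  simpa using this

theorem ideal_append_right (hI : IsIdealLang I) {u : List A} (x : List A) (hu : u ∈ I) :
    u ++ x ∈ I := by
  have := hI [] u x hu
  simpa using this

theorem sigmaI_suffix (I : Set (List A)) : ∀ h : List A, sigmaI I h <:+ h := by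
  intro h
  induction h with
  | nil => simp [sigmaI]
  | cons c h ih =>
    rw [sigmaI]
    split
    · exact ih.trans (List.suffix_cons c h)
    · exact List.suffix_rfl

theorem sigmaI_tail_notI (hε : ([] : List A) ∉ I) : ∀ h : List A, (sigmaI I h).tail ∉ I := by
  intro h
  induction h with
  | nil => simpa [sigmaI] using hε
  | cons c h ih =>
    rw [sigmaI]
    split
    · exact ih
    · simpa using ‹h ∉ I›

theorem sigmaI_mem (hε : ([] : List A) ∉ I) : ∀ h : List A, h ∈ I → sigmaI I h ∈ I := by
  intro h
  induction h with
  | nil => intro hmem; exact absurd hmem hε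
  | cons c h ih =>
    intro hmem
    rw [sigmaI]
    split
    · exact ih ‹h ∈ I›
    · exact hmem

theorem sigmaI_eq_self {h : List A} (hh : h.tail ∉ I) : sigmaI I h = h := by
  cases h with
  | nil => simp [sigmaI]
  | cons c h => rw [sigmaI, if_neg (by simpa using hh)]

theorem sigmaI_maximal {y : List A} :
    ∀ {h : List A}, y <:+ h → y.tail ∉ I → y <:+ sigmaI I h := by
  intro h
  induction h with
  | nil =>
    intro hy _
    rw [List.suffix_nil] at hy
    simp [hy, sigmaI]
  | cons c h ih =>
    intro hy hty
    rw [sigmaI]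
    rcases List.suffix_cons_iff.mp hy with rfl | hy'
    · rw [if_neg (by simpa using hty)]
    · split
      · exact ih hy' hty
      · exact hy'.trans (List.suffix_cons c h)

theorem sigmaI_idem (hI : IsIdealLang I) :
    ∀ (h w : List A), sigmaI I (sigmaI I h ++ w) = sigmaI I (h ++ w) := by
  intro h w
  induction h with
  | nil => simp [sigmaI]
  | cons c h ih =>
    rw [sigmaI]
    split
    · rw [ih, List.cons_append, sigmaI, if_pos (ideal_append_right hI w ‹h ∈ I›)]
    · rfl

/-- Complement of an ideal is closed under suffixes. -/
theorem notI_of_suffix (hI : IsIdealLang I) {y x : List A} (hs : y <:+ x) (hx : x ∉ I) :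
    y ∉ I := by
  intro hy
  obtain ⟨t, rfl⟩ := hs
  exact hx (ideal_append_left hI t hy)

/-- Collapse: reading a word of `I` erases the prefix of the history. -/
theorem sigmaI_collapse (hI : IsIdealLang I) (hε : ([] : List A) ∉ I)
    {w : List A} (hw : w ∈ I) (x : List A) : sigmaI I (x ++ w) = sigmaI I w := by
  have h1 : sigmaI I w <:+ sigmaI I (x ++ w) :=
    sigmaI_maximal ((sigmaI_suffix I w).trans (List.suffix_append x w))
      (sigmaI_tail_notI hε w)
  have hsub : sigmaI I (x ++ w) <:+ w := by
    have hxw : sigmaI I (x ++ w) <:+ x ++ w := sigmaI_suffix I (x ++ w)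
    by_cases hlen : (sigmaI I (x ++ w)).length ≤ w.length
    · exact List.suffix_of_suffix_length_le hxw (List.suffix_append x w) hlen
    · exfalso
      obtain ⟨z, hz⟩ :=
        List.suffix_of_suffix_length_le (List.suffix_append x w) hxw (le_of_not_ge hlen)
      cases z with
      | nil =>
        rw [List.nil_append] at hz
        rw [← hz] at hlen
        exact hlen le_rfl
      | cons d z' =>
        have ht : (sigmaI I (x ++ w)).tail = z' ++ w := by rw [← hz]; rfl
        exact sigmaI_tail_notI hε (x ++ w) (ht ▸ ideal_append_left hI z' hw)
  have h2 : sigmaI I (x ++ w) <:+ sigmaI I w :=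
    sigmaI_maximal hsub (sigmaI_tail_notI hε (x ++ w))
  exact h2.eq_of_length (Nat.le_antisymm h2.length_le h1.length_le)

variable (I) in
/-- The state set: words of `I` whose tail is not in `I`. -/
def QI : Type := {y : List A // y ∈ I ∧ y.tail ∉ I}

noncomputable def delI (hI : IsIdealLang I) (hε : ([] : List A) ∉ I) :
    QI I → A → QI I := fun q c =>
  ⟨sigmaI I (q.val ++ [c]),
    sigmaI_mem hε _ (ideal_append_right hI [c] q.prop.1),
    sigmaI_tail_notI hε _⟩

theorem actW_delI (hI : IsIdealLang I) (hε : ([] : List A) ∉ I) :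
    ∀ (w : List A) (q : QI I), (actW (delI hI hε) q w).val = sigmaI I (q.val ++ w) := by
  intro w
  induction w with
  | nil =>
    intro q
    simp only [actW, List.foldl_nil, List.append_nil]
    exact (sigmaI_eq_self q.prop.2).symm
  | cons c w ih =>
    intro q
    show (actW (delI hI hε) (delI hI hε q c) w).val = _
    rw [ih, delI]
    show sigmaI I (sigmaI I (q.val ++ [c]) ++ w) = _
    rw [sigmaI_idem hI, List.append_assoc, List.singleton_append]

end Aux

/-- every nonempty ideal (not necessarily regular, `ε ∉ I`) over an
alphabet with at least two letters is the set of reset words of some strongly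
connected synchronizing automaton with an at most countable state set. -/
theorem stmt14 {A : Type} [Fintype A] (hA : 1 < Fintype.card A)
    (I : Set (List A)) (hI : IsIdealLang I) (hne : I.Nonempty)
    (hε : ([] : List A) ∉ I) :
    ∃ (Q : Type) (_ : Countable Q) (_ : Nonempty Q) (δ : Q → A → Q),
      (∀ p q : Q, ∃ w : List A, actW δ p w = q) ∧ SynSet δ = I := by
  obtain ⟨m, hm⟩ := hne
  have hcnt : Countable (QI I) := by unfold QI; infer_instance
  have q₀ : QI I := ⟨sigmaI I m, sigmaI_mem hε m hm, sigmaI_tail_notI hε m⟩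
  refine ⟨QI I, hcnt, ⟨q₀⟩, delI hI hε, ?_, ?_⟩
  · -- strong connectivity
    intro p q
    refine ⟨q.val, ?_⟩
    apply Subtype.ext
    rw [actW_delI hI hε, sigmaI_collapse hI hε q.prop.1, sigmaI_eq_self q.prop.2]
  · -- SynSet = I
    ext w
    constructor
    · rintro ⟨qc, hqc⟩
      by_contra hw
      -- q₀ ends in some letter a
      have hq₀ne : q₀.val ≠ [] := by
        intro h
        exact hε (h ▸ q₀.prop.1)
      rcases (List.eq_nil_or_concat q₀.val) with h | ⟨m₀, a, hm₀⟩
      · exact hq₀ne h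
      rw [List.concat_eq_append] at hm₀
      -- a second letter b ≠ a
      have : Nontrivial A := Fintype.one_lt_card_iff_nontrivial.mp hA
      obtain ⟨b, hb⟩ := exists_ne a
      set q₂ : QI I := delI hI hε q₀ b with hq₂
      -- q₂ ends in b
      have hbq₂ : [b] <:+ q₂.val := by
        apply sigmaI_maximal (List.suffix_append q₀.val [b])
        simpa using hε
      obtain ⟨m₂, hm₂⟩ := hbq₂
      -- a :: w is a suffix of actW q₀ w, b :: w of actW q₂ w
      have hsa : (a :: w) <:+ (actW (delI hI hε) q₀ w).val := by
        rw [actW_delI hI hε]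
        apply sigmaI_maximal
        · rw [hm₀, List.append_assoc, List.singleton_append]
          exact List.suffix_append _ _
        · simpa using hw
      have hsb : (b :: w) <:+ (actW (delI hI hε) q₂ w).val := by
        rw [actW_delI hI hε]
        apply sigmaI_maximal
        · rw [← hm₂, List.append_assoc, List.singleton_append]
          exact List.suffix_append _ _
        · simpa using hw
      rw [hqc q₀] at hsa
      rw [hqc q₂] at hsb
      obtain ⟨t₁, ht₁⟩ := hsa
      obtain ⟨t₂, ht₂⟩ := hsb
      have hlen : t₁.length = t₂.length := by
        have := congrArg List.length (ht₁.trans ht₂.symm)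
        simp at this
        omega
      have := (List.append_inj (ht₁.trans ht₂.symm) hlen).2
      simp at this
      exact hb this.symm
    · intro hw
      refine ⟨⟨sigmaI I w, sigmaI_mem hε w hw, sigmaI_tail_notI hε w⟩, fun p => ?_⟩
      apply Subtype.ext
      rw [actW_delI hI hε, sigmaI_collapse hI hε hw]
end

section
/- Let Σ be a finite alphabet with at least two letters, let I ⊆ Σ* be a nonempty ideal with ε ∉ I, and let 𝓛 be a strongly connected synchronizing automaton with Syn(𝓛) = I having the universal property that every strongly connected synchronizing automaton 𝒜 with Syn(𝒜) = I admits a surjective automaton homomorphism from 𝓛 onto 𝒜. Then for any strongly connected synchronizing automaton 𝒜 with Syn(𝒜) = I, every surjective automaton homomorphism ψ : 𝒜 → 𝓛 is bijective, i.e. an isomorphism of automata. -/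
lemma actW_hom {A Q L : Type*} {δ : Q → A → Q} {ξ : L → A → L} {f : Q → L}
    (hf : ∀ (q : Q) (a : A), f (δ q a) = ξ (f q) a) :
    ∀ (w : List A) (q : Q), f (actW δ q w) = actW ξ (f q) w := by
  intro w
  induction w with
  | nil => intro q; rfl
  | cons a t ih => intro q; simp only [actW, List.foldl_cons] at *; rw [ih, hf]

/-- uniqueness of the maximal lifted strongly connected automaton: if
`𝓛` has the universal property, then any surjective homomorphism `ψ : 𝒜 → 𝓛` from a
strongly connected synchronizing automaton `𝒜` with `Syn(𝒜) = I` is bijective. -/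
theorem stmt16 {A : Type} [Fintype A] (hA : 1 < Fintype.card A)
    (I : Set (List A)) (hI : IsIdealLang I) (hne : I.Nonempty)
    (hε : ([] : List A) ∉ I)
    (L : Type) [Nonempty L] (ξ : L → A → L)
    (hLsc : ∀ p q : L, ∃ w : List A, actW ξ p w = q) (hLsyn : SynSet ξ = I)
    (huniv : ∀ (Q : Type) (_ : Nonempty Q) (δ : Q → A → Q),
        (∀ p q : Q, ∃ w : List A, actW δ p w = q) → SynSet δ = I →
        ∃ φ : L → Q, Function.Surjective φ ∧ ∀ (l : L) (a : A), φ (ξ l a) = δ (φ l) a)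
    (Q : Type) [Nonempty Q] (δ : Q → A → Q)
    (hQsc : ∀ p q : Q, ∃ w : List A, actW δ p w = q) (hQsyn : SynSet δ = I)
    (ψ : Q → L) (hψsurj : Function.Surjective ψ)
    (hψhom : ∀ (q : Q) (a : A), ψ (δ q a) = ξ (ψ q) a) :
    Function.Bijective ψ := by
  
  obtain ⟨φ, hφsurj, hφhom⟩ := huniv Q ‹_› δ hQsc hQsyn
  have hfhom : ∀ (l : L) (a : A), ψ (φ (ξ l a)) = ξ (ψ (φ l)) a := by
    intro l a; rw [hφhom, hψhom]
  obtain ⟨w, hwI⟩ := hne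
  have hwS : w ∈ SynSet ξ := hLsyn ▸ hwI
  obtain ⟨q0, hq0⟩ := hwS
  have hfix : ψ (φ q0) = q0 := by
    have := actW_hom (f := fun l => ψ (φ l)) hfhom w q0
    rw [hq0 q0] at this
    rw [this, hq0]
  have hid : ∀ l : L, ψ (φ l) = l := by
    intro l
    obtain ⟨v, hv⟩ := hLsc q0 l
    rw [← hv, actW_hom (f := fun l => ψ (φ l)) hfhom v q0]
    rw [hfix]
  constructor
  · intro a b hab
    obtain ⟨x, hx⟩ := hφsurj a
    obtain ⟨y, hy⟩ := hφsurj b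
    have : x = y := by
      rw [← hid x, ← hid y, hx, hy, hab]
    rw [← hx, ← hy, this]
  · exact hψsurj
end

section
/- Let Σ be a finite alphabet, I ⊆ Σ* a nonempty ideal with ε ∉ I, M = 𝓜(I), m = ‖I‖, and for u ∈ Σ* let ω(u) be the set of triples (h, tr(s), s⁻¹M) over suffixes s of u with s⁻¹M ≠ ∅ (h the first letter of s, or ε if s = ε). Then for all u ∈ Σ* and a ∈ Σ: ω(u·a) = {(c, t + e_a, a⁻¹D) : (c, t, D) ∈ ω(u), c ∈ Σ, a⁻¹D ≠ ∅} ∪ {(a, e_a, a⁻¹M) : if a⁻¹M ≠ ∅} ∪ {(ε, 0, M)}, where e_a : Σ → ZMod m is the indicator function of the letter a. In particular, if ω(u) = ω(v) then ω(u·a) = ω(v·a) for every a ∈ Σ. -/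
/-- `‖I‖`, the minimal length of a word of `I`. -/
noncomputable def normL {A : Type*} (I : Set (List A)) : ℕ :=
  sInf {k | ∃ u ∈ I, u.length = k}

/-- The trace of a word: the number of occurrences of each letter, modulo `m`. -/
def traceW {A : Type*} [DecidableEq A] (m : ℕ) (u : List A) : A → ZMod m :=
  fun a => (u.count a : ZMod m)

/-- `ω(u)`: the set of triples `(h, tr(s), s⁻¹𝓜(I))` where `s` ranges over the
suffixes of `u` with `s⁻¹𝓜(I) ≠ ∅`, and `h` is the first letter of `s`
(`none` when `s = ε`). -/
def omegaSet {A : Type*} [DecidableEq A] (I : Set (List A)) (m : ℕ) (u : List A) :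
    Set (Option A × (A → ZMod m) × Set (List A)) :=
  {t | ∃ s : List A, s <:+ u ∧ (lquot (MinWords I) s).Nonempty ∧
        t = (s.head?, traceW m s, lquot (MinWords I) s)}


lemma lquot_nil' {A : Type*} (L : Set (List A)) : lquot L [] = L := by
  ext w; simp [lquot]

lemma lquot_append' {A : Type*} (L : Set (List A)) (s t : List A) :
    lquot L (s ++ t) = lquot (lquot L s) t := by
  ext w; simp [lquot, List.append_assoc]

lemma traceW_append' {A : Type*} [DecidableEq A] (m : ℕ) (s t : List A) :
    traceW m (s ++ t) = traceW m s + traceW m t := by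
  funext b; simp [traceW, List.count_append]

lemma traceW_nil' {A : Type*} [DecidableEq A] (m : ℕ) :
    traceW m ([] : List A) = 0 := by
  funext b; simp [traceW]

lemma minWords_nonempty {A : Type*} {I : Set (List A)} (hne : I.Nonempty) :
    (MinWords I).Nonempty := by
  obtain ⟨w0, hw0⟩ := hne
  have hS : {k | ∃ u ∈ I, u.length = k}.Nonempty := ⟨w0.length, w0, hw0, rfl⟩
  obtain ⟨w, hwI, hwlen⟩ := Nat.sInf_mem hS
  refine ⟨w, hwI, ?_⟩
  rintro (⟨x, u, hx, huI, rfl⟩ | ⟨u, x, huI, hx, rfl⟩) <;>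
  · have h1 : sInf {k | ∃ u ∈ I, u.length = k} ≤ u.length := Nat.sInf_le ⟨u, huI, rfl⟩
    have hx' : x.length ≠ 0 := fun h => hx (List.length_eq_zero_iff.mp h)
    simp only [List.length_append] at hwlen
    omega

/-- the explicit formula for the action of a letter on `ω(u)`; in
particular `ω(u) = ω(v)` implies `ω(u·a) = ω(v·a)`. -/
theorem stmt17 {A : Type*} [Fintype A] [DecidableEq A]
    (I : Set (List A)) (hI : IsIdealLang I) (hne : I.Nonempty)
    (hε : ([] : List A) ∉ I)
    (m : ℕ) (hm : m = normL I) :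
    (∀ (u : List A) (a : A),
      omegaSet I m (u ++ [a]) =
        {t | ∃ (c : A) (tr : A → ZMod m) (D : Set (List A)),
              (some c, tr, D) ∈ omegaSet I m u ∧ (lquot D [a]).Nonempty ∧
              t = (some c, tr + traceW m [a], lquot D [a])}
        ∪ {t | (lquot (MinWords I) [a]).Nonempty ∧
              t = (some a, traceW m [a], lquot (MinWords I) [a])}
        ∪ {(none, 0, MinWords I)}) ∧
    (∀ (u v : List A) (a : A), omegaSet I m u = omegaSet I m v →
        omegaSet I m (u ++ [a]) = omegaSet I m (v ++ [a])) := by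
  have key : ∀ (u : List A) (a : A),
      omegaSet I m (u ++ [a]) =
        {t | ∃ (c : A) (tr : A → ZMod m) (D : Set (List A)),
              (some c, tr, D) ∈ omegaSet I m u ∧ (lquot D [a]).Nonempty ∧
              t = (some c, tr + traceW m [a], lquot D [a])}
        ∪ {t | (lquot (MinWords I) [a]).Nonempty ∧
              t = (some a, traceW m [a], lquot (MinWords I) [a])}
        ∪ {(none, 0, MinWords I)} := by
    intro u a
    ext t
    constructor
    · rintro ⟨s, hs, hsne, rfl⟩
      rcases List.eq_nil_or_concat s with rfl | ⟨r, b, rfl⟩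
      · right
        simp [lquot_nil', traceW_nil']
      · -- s = r ++ [b]; from suffix, b = a and r <:+ u
        simp only [List.concat_eq_append] at hs hsne ⊢
        obtain ⟨p, hp⟩ := hs
        rw [← List.append_assoc] at hp
        obtain ⟨hp1, hp2⟩ := List.append_inj' hp rfl
        have hb : b = a := by simpa using hp2
        rw [hb] at hsne ⊢
        have hr : r <:+ u := ⟨p, hp1⟩
        rcases r with _ | ⟨c, r'⟩
        · left; right
          constructor
          · simpa [lquot_nil'] using hsne
          · simp
        · left; left
          refine ⟨c, traceW m (c :: r'), lquot (MinWords I) (c :: r'), ⟨c :: r', hr, ?_, rfl⟩, ?_, ?_⟩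
          · obtain ⟨w, hw⟩ := hsne
            refine ⟨a :: w, ?_⟩
            have : (c :: r') ++ (a :: w) = ((c :: r') ++ [a]) ++ w := by simp
            simpa [lquot, this] using hw
          · rw [← lquot_append']; exact hsne
          · rw [← lquot_append', ← traceW_append']
            simp
    · rintro ((⟨c, tr, D, ⟨s, hs, hsne, heq⟩, hDne, rfl⟩ | ⟨hne', rfl⟩) | rfl)
      · simp only [Prod.mk.injEq] at heq
        obtain ⟨hh, ht, hD⟩ := heq
        subst ht
        subst hD
        rcases s with _ | ⟨c', s'⟩
        · simp at hh
        · obtain rfl : c = c' := by simpa using hh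
          obtain ⟨p, rfl⟩ := hs
          refine ⟨(c :: s') ++ [a], ⟨p, by simp⟩, ?_, ?_⟩
          · rw [lquot_append']; exact hDne
          · rw [lquot_append', traceW_append']
            simp
      · exact ⟨[a], ⟨u, rfl⟩, hne', rfl⟩
      · refine ⟨[], List.nil_suffix, ?_, ?_⟩
        · rw [lquot_nil']; exact minWords_nonempty hne
        · simp [lquot_nil', traceW_nil']
  refine ⟨key, fun u v a h => ?_⟩
  rw [key, key, h]
end
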